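/- Let q = sk + r with 1 ≤ r < k-1. Let F be a family of k-subsets of {1,...,n} containing all k-subsets of {1,...,q} and having matching number at most s. For r+1 ≤ l ≤ l' ≤ k-1 with l + l' ≤ k + r, the subfamilies F_l = {F ∈ F : |F ∩ [q]| = l} and F_{l'} = {F ∈ F : |F ∩ [q]| = l'} are cross-intersecting. -/

import Mathlib

open Finset

/-- Coordinatewise (shifting) partial order on finite sets of naturals:
`A ≼ B` iff the increasing enumerations satisfy `aₗ ≤ bₗ` for all `l`. -/
def shiftLE (A B : Finset ℕ) : Prop :=
  List.Forall₂ (· ≤ ·) (A.sort (· ≤ ·)) (B.sort (· ≤ ·))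

/-- A family on the ground set `{1,…,n}` is shifted. -/
def IsShifted (n : ℕ) (F : Finset (Finset ℕ)) : Prop :=
  ∀ B ∈ F, ∀ A ⊆ Finset.Icc 1 n, shiftLE A B → A ∈ F

/-- The matching number of `F` is at most `s`. -/
def MatchingLE (F : Finset (Finset ℕ)) (s : ℕ) : Prop :=
  ∀ M ⊆ F, (M : Set (Finset ℕ)).PairwiseDisjoint id → M.card ≤ s

/-- `F` contains `s` pairwise disjoint members. -/
def HasMatching (F : Finset (Finset ℕ)) (s : ℕ) : Prop :=
  ∃ M ⊆ F, (M : Set (Finset ℕ)).PairwiseDisjoint id ∧ M.card = s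

/-- The clique number of `F` (as a `k`-graph on `{1,…,n}`) is at least `q`. -/
def HasClique (n : ℕ) (F : Finset (Finset ℕ)) (k q : ℕ) : Prop :=
  ∃ Q ⊆ Finset.Icc 1 n, Q.card = q ∧ Q.powersetCard k ⊆ F

lemma exists_submatching (k : ℕ) (hk : 1 ≤ k) :
    ∀ m (S : Finset ℕ), m * k ≤ S.card →
    ∃ M : Finset (Finset ℕ), M.card = m ∧ (∀ T ∈ M, T ⊆ S ∧ T.card = k) ∧
      (M : Set (Finset ℕ)).PairwiseDisjoint id := by
  intro m
  induction m with
  | zero => exact fun S _ => ⟨∅, by simp, by simp, by simp⟩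
  | succ m ih =>
    intro S hS
    have hkS : k ≤ S.card := le_trans (by nlinarith) hS
    obtain ⟨T, hTS, hTcard⟩ := Finset.exists_subset_card_eq hkS
    have hcard : m * k ≤ (S \ T).card := by
      rw [Finset.card_sdiff_of_subset hTS, hTcard]
      have : (m + 1) * k = m * k + k := by ring
      omega
    obtain ⟨M, hMcard, hMsub, hMdisj⟩ := ih (S \ T) hcard
    have hTne : T.Nonempty := by
      rw [← Finset.card_pos, hTcard]; omega
    have hdisj : ∀ T' ∈ M, Disjoint T T' := by
      intro T' hT'
      have := (hMsub T' hT').1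
      rw [Finset.disjoint_left]
      intro a ha ha'
      exact (Finset.mem_sdiff.mp (this ha')).2 ha
    have hTM : T ∉ M := by
      intro h
      obtain ⟨t, ht⟩ := hTne
      exact Finset.disjoint_left.mp (hdisj T h) ht ht
    refine ⟨insert T M, ?_, ?_, ?_⟩
    · rw [Finset.card_insert_of_notMem hTM, hMcard]
    · intro T' hT'
      rcases Finset.mem_insert.mp hT' with h | h
      · subst h; exact ⟨hTS, hTcard⟩
      · exact ⟨(hMsub T' h).1.trans (Finset.sdiff_subset), (hMsub T' h).2⟩
    · rw [Finset.coe_insert]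
      exact hMdisj.insert (fun T' hT' _ => hdisj T' hT')

theorem stmt_5 (n k s r q l l' : ℕ) (hq : q = s * k + r)
    (hr1 : 1 ≤ r) (hr2 : r < k - 1)
    (F : Finset (Finset ℕ)) (hF : F ⊆ (Finset.Icc 1 n).powersetCard k)
    (hclq : (Finset.Icc 1 q).powersetCard k ⊆ F)
    (hmatch : MatchingLE F s)
    (hl : r + 1 ≤ l) (hll' : l ≤ l') (hl' : l' ≤ k - 1) (hsum : l + l' ≤ k + r) :
    ∀ A ∈ F, (A ∩ Finset.Icc 1 q).card = l →
      ∀ B ∈ F, (B ∩ Finset.Icc 1 q).card = l' → (A ∩ B).Nonempty := by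
  intro A hA hAl B hB hBl'
  by_contra hne
  rw [Finset.not_nonempty_iff_eq_empty] at hne
  have hABdisj : Disjoint A B := Finset.disjoint_iff_inter_eq_empty.mpr hne
  have hk3 : 3 ≤ k := by omega
  -- A, B have card k
  have hAk : A.card = k := (Finset.mem_powersetCard.mp (hF hA)).2
  have hBk : B.card = k := (Finset.mem_powersetCard.mp (hF hB)).2
  -- l ≤ q
  have hlq : l ≤ q := by
    rw [← hAl]
    calc (A ∩ Finset.Icc 1 q).card ≤ (Finset.Icc 1 q).card :=
          Finset.card_le_card (Finset.inter_subset_right)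
      _ = q := by rw [Nat.card_Icc]; omega
  have hs1 : 1 ≤ s := by
    by_contra h
    have : s = 0 := by omega
    subst this; simp at hq; omega
  -- the leftover set
  set S := Finset.Icc 1 q \ (A ∪ B) with hSdef
  have hScard : (s - 1) * k ≤ S.card := by
    have h1 : ((A ∪ B) ∩ Finset.Icc 1 q).card ≤ l + l' := by
      rw [Finset.union_inter_distrib_right]
      calc ((A ∩ Finset.Icc 1 q) ∪ (B ∩ Finset.Icc 1 q)).card
          ≤ (A ∩ Finset.Icc 1 q).card + (B ∩ Finset.Icc 1 q).card :=
            Finset.card_union_le _ _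
        _ = l + l' := by rw [hAl, hBl']
    have h2 : S.card = q - (Finset.Icc 1 q ∩ (A ∪ B)).card := by
      rw [hSdef]
      have h3 := Finset.card_sdiff_add_card_inter (Finset.Icc 1 q) (A ∪ B)
      have h4 : (Finset.Icc 1 q).card = q := by rw [Nat.card_Icc]; omega
      omega
    have h5 : (Finset.Icc 1 q ∩ (A ∪ B)).card ≤ l + l' := by
      rw [Finset.inter_comm]; exact h1
    have key : (s - 1) * k + (l + l') ≤ q := by
      obtain ⟨s', rfl⟩ := Nat.exists_eq_add_of_le hs1
      have hmul : (1 + s') * k = k + s' * k := by ring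
      have hsub : 1 + s' - 1 = s' := by omega
      rw [hsub]
      omega
    have h8 : q - (l + l') ≤ S.card := by omega
    exact le_trans (by omega) h8
  obtain ⟨M, hMcard, hMsub, hMdisj⟩ := exists_submatching k (by omega) (s - 1) S hScard
  -- A, B disjoint from every member of M
  have hAdisj : ∀ T ∈ M, Disjoint A T := by
    intro T hT
    rw [Finset.disjoint_right]
    intro a ha ha'
    have := (hMsub T hT).1 ha
    rw [hSdef, Finset.mem_sdiff] at this
    exact this.2 (Finset.mem_union_left _ ha')
  have hBdisj : ∀ T ∈ M, Disjoint B T := by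
    intro T hT
    rw [Finset.disjoint_right]
    intro a ha ha'
    have := (hMsub T hT).1 ha
    rw [hSdef, Finset.mem_sdiff] at this
    exact this.2 (Finset.mem_union_right _ ha')
  have hAne : A.Nonempty := by rw [← Finset.card_pos, hAk]; omega
  have hBne : B.Nonempty := by rw [← Finset.card_pos, hBk]; omega
  have hAB : A ≠ B := by
    intro h
    obtain ⟨a, ha⟩ := hAne
    exact Finset.disjoint_left.mp hABdisj ha (h ▸ ha)
  have hAM : A ∉ M := fun h => by
    obtain ⟨a, ha⟩ := hAne
    exact Finset.disjoint_left.mp (hAdisj A h) ha ha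
  have hBM : B ∉ M := fun h => by
    obtain ⟨b, hb⟩ := hBne
    exact Finset.disjoint_left.mp (hBdisj B h) hb hb
  -- the big matching
  set M' := insert A (insert B M) with hM'def
  have hM'sub : M' ⊆ F := by
    intro T hT
    rw [hM'def, Finset.mem_insert, Finset.mem_insert] at hT
    rcases hT with h | h | h
    · exact h ▸ hA
    · exact h ▸ hB
    · apply hclq
      rw [Finset.mem_powersetCard]
      exact ⟨(hMsub T h).1.trans (Finset.sdiff_subset), (hMsub T h).2⟩
  have hM'disj : (M' : Set (Finset ℕ)).PairwiseDisjoint id := by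
    rw [hM'def, Finset.coe_insert, Finset.coe_insert]
    apply Set.PairwiseDisjoint.insert
    · apply hMdisj.insert
      intro T hT _
      exact hBdisj T hT
    · intro T hT _
      rcases hT with h | h
      · exact h ▸ hABdisj
      · exact hAdisj T h
  have hM'card : M'.card = s + 1 := by
    rw [hM'def, Finset.card_insert_of_notMem, Finset.card_insert_of_notMem hBM, hMcard]
    · omega
    · rw [Finset.mem_insert]
      push_neg
      exact ⟨hAB, hAM⟩
  have := hmatch M' hM'sub hM'disj
  omega
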